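/- arXiv:1004.1444 — 2 statements merged into one kernel-verified Lean document; each statement's English description precedes it below -/
import Mathlib

section
/- Let k and n be integers with 0 ≤ k ≤ n, and let α satisfy n < α ≤ n+1. Let {z_j} ⊂ 𝔻 be a sequence of pairwise distinct points having no accumulation point inside 𝔻, set d_j := inf_{l≠j} |z_j − z_l| and E := clos{z_j}. Define φ_s : E → ℂ for s = 0,…,n by φ_s ≡ 0 for s ≠ k, φ_k(z_j) := d_j^{α−k} for all j, and φ_k := 0 on E ∩ 𝕋. Then (φ_0,…,φ_n) is an α-admissible jet on E; in fact, for all z, w ∈ E and every s ∈ {0,…,n}, |φ_s(z) − ∑_{m=0}^{n−s} φ_{s+m}(w)(z−w)^m/m!| ≤ |z−w|^{α−s}. -/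
open Complex Metric Filter MeasureTheory

noncomputable section

/-- Membership in the analytic Lipschitz space `A^α` on the unit disk:
`f` is analytic and bounded on `𝔻`, and its derivative of order `m := ⌊α⌋ + 1`
satisfies `|f^(m)(z)| ≤ C (1 - |z|)^(α - m)`. -/
def MemA (α : ℝ) (f : ℂ → ℂ) : Prop :=
  DifferentiableOn ℂ f (ball (0:ℂ) 1) ∧
  (∃ M : ℝ, ∀ z ∈ ball (0:ℂ) 1, ‖f z‖ ≤ M) ∧
  (∃ C : ℝ, ∀ z ∈ ball (0:ℂ) 1,
    ‖iteratedDeriv (⌊α⌋₊ + 1) f z‖ ≤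
      C * (1 - ‖z‖) ^ (α - ((⌊α⌋₊ : ℝ) + 1)))

/-- Membership in `H^∞_N`: `f` is analytic on `𝔻` and both `f` and `f^(N)` are bounded there. -/
def MemH (N : ℕ) (f : ℂ → ℂ) : Prop :=
  DifferentiableOn ℂ f (ball (0:ℂ) 1) ∧
  (∃ M : ℝ, ∀ z ∈ ball (0:ℂ) 1, ‖f z‖ ≤ M) ∧
  (∃ M : ℝ, ∀ z ∈ ball (0:ℂ) 1, ‖iteratedDeriv N f z‖ ≤ M)

/-- `θ` is an inner function: bounded and analytic on `𝔻`, with radial limits of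
modulus `1` at almost every boundary point. -/
def IsInner (θ : ℂ → ℂ) : Prop :=
  DifferentiableOn ℂ θ (ball (0:ℂ) 1) ∧
  (∃ M : ℝ, ∀ z ∈ ball (0:ℂ) 1, ‖θ z‖ ≤ M) ∧
  (∀ᵐ t : ℝ ∂volume,
    Tendsto (fun r : ℝ => ‖θ ((r : ℂ) * Complex.exp ((t : ℂ) * Complex.I))‖)
      (nhdsWithin 1 (Set.Iio 1)) (nhds 1))

/-- The Blaschke product with zero sequence `zs`. -/
def blaschkeProd (zs : ℕ → ℂ) (z : ℂ) : ℂ :=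
  ∏' j, ((starRingEnd ℂ) (zs j) / (‖zs j‖ : ℂ)) *
    ((zs j - z) / (1 - (starRingEnd ℂ) (zs j) * z))

/-- `dsep zs j = inf_{l ≠ j} |z_j - z_l|`. -/
def dsep (zs : ℕ → ℂ) (j : ℕ) : ℝ :=
  ⨅ l : {l : ℕ // l ≠ j}, ‖zs j - zs l.1‖

/-- The pseudohyperbolic distance `ρ(z,w) = |z - w| / |1 - conj w * z|`. -/
def pseudoDist (z w : ℂ) : ℝ :=
  ‖z - w‖ / ‖1 - (starRingEnd ℂ) w * z‖

/-- `X` is an ideal subspace of the space of functions on `𝔻` described by the predicate `Y`. -/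
def IsIdealSubspace (Y : (ℂ → ℂ) → Prop) (X : Set (ℂ → ℂ)) : Prop :=
  ∀ f ∈ X, ∀ g : ℂ → ℂ, Y g →
    (∀ z ∈ ball (0:ℂ) 1, ‖g z‖ ≤ ‖f z‖) → g ∈ X

/-- `(φ_0, …, φ_n)` is an `α`-admissible jet on `E`. -/
def AdmissibleJet (α : ℝ) (n : ℕ) (E : Set ℂ) (φ : ℕ → ℂ → ℂ) : Prop :=
  ∃ C : ℝ, ∀ z ∈ E, ∀ w ∈ E, ∀ s ≤ n,
    ‖φ s z -
        ∑ m ∈ Finset.range (n - s + 1), φ (s + m) w * (z - w) ^ m / (Nat.factorial m : ℂ)‖ ≤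
      C * ‖z - w‖ ^ (α - (s : ℝ))

/-- `E` is an `A^α`-interpolating set (here `n = ⌊α⌋`): every `α`-admissible jet on `E`
is the jet of derivatives (within the closed disk) of some function in `A^α`. -/
def IsAInterpSet (α : ℝ) (n : ℕ) (E : Set ℂ) : Prop :=
  IsClosed E ∧ E ⊆ closedBall (0:ℂ) 1 ∧
  ∀ φ : ℕ → ℂ → ℂ, AdmissibleJet α n E φ →
    ∃ g : ℂ → ℂ, MemA α g ∧
      ∀ s ≤ n, ∀ z ∈ E, iteratedDerivWithin s g (closedBall (0:ℂ) 1) z = φ s z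

/-- `E` is an `H^∞_1`-interpolating set: every Lipschitz function on `E` extends to
a function in `H^∞_1`. -/
def IsH1InterpSet (E : Set ℂ) : Prop :=
  IsClosed E ∧ E ⊆ closedBall (0:ℂ) 1 ∧
  ∀ φ : ℂ → ℂ,
    (∃ C : ℝ, ∀ z ∈ E, ∀ w ∈ E, ‖φ z - φ w‖ ≤ C * ‖z - w‖) →
    ∃ f : ℂ → ℂ, MemH 1 f ∧ ∀ z ∈ E, f z = φ z

/-- The ideal `J_k = {f ∈ A^α : f B^k ∈ A^α}`. -/
def Jset (α : ℝ) (B : ℂ → ℂ) (k : ℕ) : Set (ℂ → ℂ) :=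
  {f | MemA α f ∧ MemA α (fun z => f z * (B z) ^ k)}

/-- The ideal `I_k = {f ∈ H^∞_{N} : f B^k ∈ H^∞_{N}}`. -/
def Iset (N : ℕ) (B : ℂ → ℂ) (k : ℕ) : Set (ℂ → ℂ) :=
  {f | MemH N f ∧ MemH N (fun z => f z * (B z) ^ k)}

/-- Arclength measure on the unit circle `𝕋 ⊆ ℂ`. -/
def arcMeasure : Measure ℂ :=
  Measure.map (fun t : ℝ => Complex.exp ((t : ℂ) * Complex.I))
    (volume.restrict (Set.Ico 0 (2 * Real.pi)))

/-- `S` is a singular inner function: `S = exp(-∫ (ζ+z)/(ζ-z) dμ(ζ))` for some finite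
nonnegative measure `μ` on the unit circle which is singular with respect to arclength. -/
def IsSingularInner (S : ℂ → ℂ) : Prop :=
  ∃ μ : Measure ℂ, IsFiniteMeasure μ ∧
    μ (Set.univ \ sphere (0:ℂ) 1) = 0 ∧
    μ.MutuallySingular arcMeasure ∧
    ∀ z ∈ ball (0:ℂ) 1, S z = Complex.exp (-∫ ζ, (ζ + z) / (ζ - z) ∂μ)

private lemma dsep_nonneg' (zs : ℕ → ℂ) (j : ℕ) : 0 ≤ dsep zs j :=
  Real.iInf_nonneg fun _ => norm_nonneg _

private lemma dsep_le' (zs : ℕ → ℂ) {j : ℕ} {w : ℂ}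
    (hw : w ∈ closure (Set.range zs)) (hne : w ≠ zs j) :
    dsep zs j ≤ ‖zs j - w‖ := by
  have hclosed : IsClosed ({zs j} ∪ {x : ℂ | dsep zs j ≤ ‖zs j - x‖}) := by
    refine IsClosed.union isClosed_singleton (isClosed_le continuous_const ?_)
    exact continuous_norm.comp (continuous_const.sub continuous_id)
  have hsub : Set.range zs ⊆ {zs j} ∪ {x : ℂ | dsep zs j ≤ ‖zs j - x‖} := by
    rintro _ ⟨l, rfl⟩
    by_cases h : l = j
    · exact Or.inl (by simp [h])
    · refine Or.inr ?_
      have hb : BddBelow (Set.range fun l : {l : ℕ // l ≠ j} =>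
          ‖zs j - zs l.1‖) := ⟨0, by rintro _ ⟨i, rfl⟩; exact norm_nonneg _⟩
      exact ciInf_le hb ⟨l, h⟩
  rcases closure_minimal hsub hclosed hw with h | h
  · exact absurd (Set.mem_singleton_iff.mp h) hne
  · exact h

private lemma mem_cases' (zs : ℕ → ℂ) (hzs : ∀ j, zs j ∈ ball (0:ℂ) 1)
    (hinj : Function.Injective zs)
    (hacc : ∀ z ∈ ball (0:ℂ) 1, ¬ ClusterPt z (Filter.map zs Filter.atTop))
    {z : ℂ} (hz : z ∈ closure (Set.range zs)) :
    (∃ j, z = zs j) ∨ ‖z‖ = 1 := by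
  by_cases hr : z ∈ Set.range zs
  · rcases hr with ⟨j, hj⟩; exact Or.inl ⟨j, hj.symm⟩
  right
  have hle : ‖z‖ ≤ 1 := by
    have hsub : closure (Set.range zs) ⊆ closedBall (0:ℂ) 1 :=
      closure_minimal (by rintro _ ⟨j, rfl⟩; exact ball_subset_closedBall (hzs j)) isClosed_closedBall
    simpa [Complex.dist_eq] using mem_closedBall.mp (hsub hz)
  rcases lt_or_eq_of_le hle with hlt | he
  · exfalso
    apply hacc z (by simpa [Complex.dist_eq] using hlt)
    rw [clusterPt_iff_nonempty]
    intro U hU V hV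
    rcases (Filter.eventually_atTop).mp (Filter.mem_map.mp hV) with ⟨N, hN⟩
    have hTz : z ∈ (↑((Finset.range N).image zs) : Set ℂ)ᶜ := by
      simp only [Set.mem_compl_iff, Finset.coe_image, Set.mem_image]
      rintro ⟨i, -, hi⟩
      exact hr ⟨i, hi⟩
    have hU' : U ∩ (↑((Finset.range N).image zs) : Set ℂ)ᶜ ∈ nhds z :=
      Filter.inter_mem hU (((Finset.range N).image zs).finite_toSet.isClosed.isOpen_compl.mem_nhds hTz)
    rcases mem_closure_iff_nhds.mp hz _ hU' with ⟨x, ⟨hxU, hxT⟩, j, hj⟩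
    refine ⟨x, hxU, ?_⟩
    have hjN : N ≤ j := by
      by_contra hjN
      exact hxT (by
        simp only [Finset.coe_image, Set.mem_image]
        exact ⟨j, by simpa using Nat.lt_of_not_le hjN, hj⟩)
    exact hj ▸ hN j hjN
  · exact he


/-- **Lemma (admissible jet).** Let `0 ≤ k ≤ n < α ≤ n+1`, and let `{z_j} ⊆ 𝔻` be a sequence
of distinct points with no accumulation point in `𝔻`. Define `φ_s ≡ 0` for `s ≠ k`,
`φ_k(z_j) = d_j^(α-k)` and `φ_k = 0` on `E ∩ 𝕋`, where `E = clos{z_j}`. Then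
`(φ_0, …, φ_n)` is an `α`-admissible jet on `E`; in fact the jet inequalities hold with
constant `C = 1`. -/
theorem admissible_jet_lemma
    (k n : ℕ) (hkn : k ≤ n) (α : ℝ) (hα₁ : (n : ℝ) < α) (hα₂ : α ≤ (n : ℝ) + 1)
    (zs : ℕ → ℂ) (hzs : ∀ j, zs j ∈ ball (0:ℂ) 1)
    (hinj : Function.Injective zs)
    (hacc : ∀ z ∈ ball (0:ℂ) 1, ¬ ClusterPt z (Filter.map zs Filter.atTop))
    (φ : ℕ → ℂ → ℂ)
    (hφ₀ : ∀ s ≤ n, s ≠ k → ∀ z ∈ closure (Set.range zs), φ s z = 0)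
    (hφk : ∀ j, φ k (zs j) = ((dsep zs j ^ (α - (k : ℝ)) : ℝ) : ℂ))
    (hφT : ∀ z ∈ closure (Set.range zs), ‖z‖ = 1 → φ k z = 0) :
    ∀ z ∈ closure (Set.range zs), ∀ w ∈ closure (Set.range zs), ∀ s ≤ n,
      ‖φ s z -
          ∑ m ∈ Finset.range (n - s + 1), φ (s + m) w * (z - w) ^ m / (Nat.factorial m : ℂ)‖ ≤
        ‖z - w‖ ^ (α - (s : ℝ)) := by
  intro z hz w hw s hs
  have hks : (k:ℝ) ≤ n := Nat.cast_le.mpr hkn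
  have hsn : (s:ℝ) ≤ n := Nat.cast_le.mpr hs
  have hγ : (0:ℝ) < α - k := by linarith
  have hrpos : (0:ℝ) ≤ ‖z - w‖ ^ (α - (s:ℝ)) :=
    Real.rpow_nonneg (norm_nonneg _) _
  by_cases hsk : k < s
  · -- every φ appearing vanishes
    have hsum : ∑ m ∈ Finset.range (n - s + 1),
        φ (s + m) w * (z - w) ^ m / (Nat.factorial m : ℂ) = 0 := by
      refine Finset.sum_eq_zero fun m hm => ?_
      have hm' := Finset.mem_range.mp hm
      rw [hφ₀ (s + m) (by omega) (by omega) w hw]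
      simp
    rw [hsum, hφ₀ s hs (by omega) z hz, sub_zero]
    simpa using hrpos
  push_neg at hsk
  -- now s ≤ k; the sum collapses to the single term m = k - s
  have hsum : ∑ m ∈ Finset.range (n - s + 1),
      φ (s + m) w * (z - w) ^ m / (Nat.factorial m : ℂ)
      = φ k w * (z - w) ^ (k - s) / (Nat.factorial (k - s) : ℂ) := by
    rw [Finset.sum_eq_single (k - s)]
    · rw [Nat.add_sub_cancel' hsk]
    · intro m hm hne
      have hm' := Finset.mem_range.mp hm
      rw [hφ₀ (s + m) (by omega) (by omega) w hw]
      simp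
    · intro h
      exact absurd (Finset.mem_range.mpr (by omega)) h
  rw [hsum]
  -- key bound : |φ_k v| ≤ |u - v|^(α-k) whenever u ≠ v
  have habsφ : ∀ u ∈ closure (Set.range zs), ∀ v ∈ closure (Set.range zs), u ≠ v →
      ‖φ k v‖ ≤ ‖u - v‖ ^ (α - (k:ℝ)) := by
    intro u hu v hv huv
    rcases mem_cases' zs hzs hinj hacc hv with ⟨j, rfl⟩ | hvb
    · rw [hφk j, Complex.norm_real, Real.norm_eq_abs,
        _root_.abs_of_nonneg (Real.rpow_nonneg (dsep_nonneg' zs j) _)]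
      have hd : dsep zs j ≤ ‖u - zs j‖ := by
        have h := dsep_le' zs hu huv
        rwa [norm_sub_rev] at h
      exact Real.rpow_le_rpow (dsep_nonneg' zs j) hd hγ.le
    · rw [hφT v hv hvb]
      simpa using Real.rpow_nonneg (norm_nonneg _) _
  by_cases hzw : z = w
  · subst hzw
    rcases Nat.eq_or_lt_of_le hsk with rfl | hlt
    · simp only [Nat.sub_self, pow_zero, Nat.factorial_zero, Nat.cast_one, mul_one, div_one,
        sub_self, norm_zero]
      exact Real.rpow_nonneg le_rfl _
    · rw [hφ₀ s hs (by omega) z hz]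
      rw [sub_self, zero_pow (by omega : k - s ≠ 0)]
      simpa using hrpos
  -- z ≠ w
  have hD : 0 < ‖z - w‖ := by
    rw [norm_pos_iff]; exact sub_ne_zero_of_ne hzw
  rcases Nat.eq_or_lt_of_le hsk with rfl | hlt
  · -- s = k
    simp only [Nat.sub_self, pow_zero, Nat.factorial_zero, Nat.cast_one, mul_one, div_one]
    rcases mem_cases' zs hzs hinj hacc hz with ⟨l, rfl⟩ | hzb
    · rcases mem_cases' zs hzs hinj hacc hw with ⟨j, rfl⟩ | hwb
      · -- both are points of the sequence
        rw [hφk l, hφk j, ← Complex.ofReal_sub, Complex.norm_real, Real.norm_eq_abs]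
        have hdl : dsep zs l ≤ ‖zs l - zs j‖ := dsep_le' zs hw (Ne.symm hzw)
        have hdj : dsep zs j ≤ ‖zs l - zs j‖ := by
          have h := dsep_le' zs hz hzw
          rwa [norm_sub_rev] at h
        have h1 : dsep zs l ^ (α - (s:ℝ)) ≤ ‖zs l - zs j‖ ^ (α - (s:ℝ)) :=
          Real.rpow_le_rpow (dsep_nonneg' zs l) hdl hγ.le
        have h2 : dsep zs j ^ (α - (s:ℝ)) ≤ ‖zs l - zs j‖ ^ (α - (s:ℝ)) :=
          Real.rpow_le_rpow (dsep_nonneg' zs j) hdj hγ.le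
        have h3 : (0:ℝ) ≤ dsep zs l ^ (α - (s:ℝ)) :=
          Real.rpow_nonneg (dsep_nonneg' zs l) _
        have h4 : (0:ℝ) ≤ dsep zs j ^ (α - (s:ℝ)) :=
          Real.rpow_nonneg (dsep_nonneg' zs j) _
        rw [abs_sub_le_iff]
        constructor <;> linarith
      · rw [hφT w hw hwb, sub_zero]
        have := habsφ w hw _ hz (Ne.symm hzw)
        rwa [norm_sub_rev] at this
    · rw [hφT _ hz hzb, zero_sub, norm_neg]
      exact habsφ z hz w hw hzw
  · -- s < k
    rw [hφ₀ s hs (by omega) z hz, zero_sub, norm_neg, norm_div, norm_mul, norm_pow]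
    have hfac : (1:ℝ) ≤ ‖(Nat.factorial (k - s) : ℂ)‖ := by
      rw [Complex.norm_natCast]
      exact_mod_cast Nat.one_le_iff_ne_zero.mpr (Nat.factorial_ne_zero _)
    have hnum : ‖φ k w‖ * ‖z - w‖ ^ (k - s) ≤
        ‖z - w‖ ^ (α - (s:ℝ)) := by
      have h1 : ‖φ k w‖ ≤ ‖z - w‖ ^ (α - (k:ℝ)) :=
        habsφ z hz w hw hzw
      have h2 : ‖φ k w‖ * ‖z - w‖ ^ (k - s) ≤
          ‖z - w‖ ^ (α - (k:ℝ)) * ‖z - w‖ ^ (k - s) :=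
        mul_le_mul_of_nonneg_right h1 (pow_nonneg (norm_nonneg _) _)
      refine h2.trans (le_of_eq ?_)
      rw [← Real.rpow_natCast (‖z - w‖) (k - s), ← Real.rpow_add hD]
      congr 1
      rw [Nat.cast_sub hsk]
      ring
    calc ‖φ k w‖ * ‖z - w‖ ^ (k - s) /
          ‖(Nat.factorial (k - s) : ℂ)‖
        ≤ ‖φ k w‖ * ‖z - w‖ ^ (k - s) := by
          apply div_le_self (mul_nonneg (norm_nonneg _)
            (pow_nonneg (norm_nonneg _) _)) hfac
      _ ≤ _ := hnum
end
end

section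
/- Suppose B is an interpolating Blaschke product with pairwise distinct zeros {z_j}, and let δ := inf_j ∏_{l≠j} ρ(z_j,z_l) > 0 be its Carleson constant. Then for every m ∈ ℕ there exist constants c, C > 0, depending only on m and δ, such that c(1−|z_j|)^{−m} ≤ |(B^m)^{(m)}(z_j)| ≤ C(1−|z_j|)^{−m} for all j. -/
open Complex Metric Filter MeasureTheory
open Topology

noncomputable section

lemma analyticAt_deriv {H : ℂ → ℂ} {a : ℂ} (hH : AnalyticAt ℂ H a) :
    AnalyticAt ℂ (deriv H) a := by
  obtain ⟨t, hta, hto, ht⟩ := _root_.mem_nhds_iff.1 hH.eventually_analyticAt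
  exact (AnalyticOnNhd.deriv (fun z hz => hta hz)) a ht

lemma iteratedDeriv_sub_pow_mul (a : ℂ) : ∀ (m : ℕ) (H : ℂ → ℂ), AnalyticAt ℂ H a →
    iteratedDeriv m (fun z => (z - a) ^ m * H z) a = (Nat.factorial m : ℂ) * H a := by
  intro m
  induction m with
  | zero => intro H _; simp
  | succ n ih =>
    intro H hH
    have hK : AnalyticAt ℂ (fun z => ((n : ℂ) + 1) * H z + (z - a) * deriv H z) a := by
      exact (analyticAt_const.mul hH).add
        (((analyticAt_id).sub analyticAt_const).mul (analyticAt_deriv hH))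
    have hev : deriv (fun z => (z - a) ^ (n + 1) * H z) =ᶠ[𝓝 a]
        fun z => (z - a) ^ n * (((n : ℂ) + 1) * H z + (z - a) * deriv H z) := by
      filter_upwards [hH.eventually_analyticAt] with z hz
      have h1 : HasDerivAt (fun w : ℂ => (w - a) ^ (n + 1))
          (((n : ℕ) + 1 : ℂ) * (z - a) ^ n) z := by
        have := ((hasDerivAt_id z).sub_const a).fun_pow (n + 1)
        simpa using this
      have h2 : HasDerivAt H (deriv H z) z := hz.differentiableAt.hasDerivAt
      have := (h1.fun_mul h2).deriv
      rw [this]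
      push_cast
      ring
    rw [iteratedDeriv_succ']
    rw [Filter.EventuallyEq.iteratedDeriv_eq n hev]
    rw [ih _ hK]
    rw [Nat.factorial_succ]
    push_cast
    ring

lemma normSq_ident (w z : ℂ) :
    Complex.normSq (1 - (starRingEnd ℂ) w * z) - Complex.normSq (z - w)
      = (1 - Complex.normSq w) * (1 - Complex.normSq z) := by
  simp only [Complex.normSq_apply, Complex.sub_re, Complex.sub_im, Complex.mul_re,
    Complex.mul_im, Complex.one_re, Complex.one_im, Complex.conj_re, Complex.conj_im]
  ring

lemma dist_le_denom {w z : ℂ} (hw : ‖w‖ ≤ 1) (hz : ‖z‖ ≤ 1) :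
    ‖z - w‖ ≤ ‖1 - (starRingEnd ℂ) w * z‖ := by
  have h1 : Complex.normSq w ≤ 1 := by
    rw [Complex.normSq_eq_norm_sq]; nlinarith [norm_nonneg w]
  have h2 : Complex.normSq z ≤ 1 := by
    rw [Complex.normSq_eq_norm_sq]; nlinarith [norm_nonneg z]
  have key := normSq_ident w z
  have : Complex.normSq (z - w) ≤ Complex.normSq (1 - (starRingEnd ℂ) w * z) := by nlinarith
  rw [Complex.norm_def, Complex.norm_def]
  exact Real.sqrt_le_sqrt this

lemma conj_mul_self (w : ℂ) : (starRingEnd ℂ) w * w = ((‖w‖ : ℂ)) ^ 2 := by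
  rw [mul_comm, Complex.mul_conj]; norm_cast; rw [Complex.normSq_eq_norm_sq]

lemma denom_lb {w z : ℂ} (hw : ‖w‖ ≤ 1) :
    1 - ‖z‖ ≤ ‖1 - (starRingEnd ℂ) w * z‖ := by
  have h1 : ‖(starRingEnd ℂ) w * z‖ ≤ ‖z‖ := by
    rw [norm_mul, Complex.norm_conj]
    nlinarith [norm_nonneg z, norm_nonneg w]
  calc 1 - ‖z‖ ≤ ‖(1:ℂ)‖ - ‖(starRingEnd ℂ) w * z‖ := by
        simp only [norm_one]; linarith
    _ ≤ ‖1 - (starRingEnd ℂ) w * z‖ := norm_sub_norm_le _ _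
    _ = _ := rfl

lemma denom_ne_zero {w z : ℂ} (hw : ‖w‖ ≤ 1) (hz : ‖z‖ < 1) :
    1 - (starRingEnd ℂ) w * z ≠ 0 := by
  intro h
  have := denom_lb (z := z) hw
  rw [h] at this; simp at this; linarith

lemma factor_sub_one {w : ℂ} (z : ℂ) (hw : w ≠ 0)
    (hd : 1 - (starRingEnd ℂ) w * z ≠ 0) :
    ((starRingEnd ℂ) w / (‖w‖ : ℂ)) * ((w - z) / (1 - (starRingEnd ℂ) w * z)) - 1
      = -((1 - (‖w‖ : ℂ)) * (1 + z * ((starRingEnd ℂ) w / (‖w‖ : ℂ))))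
          / (1 - (starRingEnd ℂ) w * z) := by
  have habs : (‖w‖ : ℂ) ≠ 0 := by
    simpa using (norm_ne_zero_iff.mpr hw)
  have key : (starRingEnd ℂ) w * w = ((‖w‖ : ℂ)) ^ 2 := conj_mul_self w
  field_simp
  linear_combination key

lemma factor_sub_one_norm {w z : ℂ} (hw0 : w ≠ 0) (hw : ‖w‖ ≤ 1)
    (hz : ‖z‖ < 1) :
    ‖((starRingEnd ℂ) w / (‖w‖ : ℂ)) *
        ((w - z) / (1 - (starRingEnd ℂ) w * z)) - 1‖
      ≤ 2 * (1 - ‖w‖) / (1 - ‖z‖) := by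
  have hden := denom_lb (z := z) hw
  have hdpos : 0 < 1 - ‖z‖ := by linarith
  rw [factor_sub_one z hw0 (denom_ne_zero hw hz), norm_div, norm_neg, norm_mul]
  have hA : ‖1 - (‖w‖ : ℂ)‖ = 1 - ‖w‖ := by
    rw [show (1 : ℂ) - (‖w‖ : ℂ) = ((1 - ‖w‖ : ℝ) : ℂ) by push_cast; ring,
      Complex.norm_real, Real.norm_eq_abs, _root_.abs_of_nonneg (by linarith)]
  have hB : ‖1 + z * ((starRingEnd ℂ) w / (‖w‖ : ℂ))‖ ≤ 2 := by
    have hκ : ‖(starRingEnd ℂ) w / (‖w‖ : ℂ)‖ = 1 := by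
      rw [norm_div, Complex.norm_conj, Complex.norm_real, Real.norm_eq_abs,
        _root_.abs_of_nonneg (norm_nonneg w), div_self (norm_ne_zero_iff.mpr hw0)]
    calc ‖1 + z * _‖ ≤ ‖1‖ + ‖z * _‖ := norm_add_le _ _
      _ = 1 + ‖z‖ * 1 := by rw [norm_one, norm_mul, hκ]
      _ ≤ 2 := by linarith
  rw [hA]
  apply div_le_div₀ (by linarith)
    (by nlinarith [norm_nonneg (1 + z * ((starRingEnd ℂ) w / (‖w‖ : ℂ)))])
    hdpos hden

/-- Local factorization of a Blaschke product near one of its zeros. -/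
lemma blaschke_local_factor (δ : ℝ) (hδ : 0 < δ) (zs : ℕ → ℂ)
    (hmem : ∀ j, zs j ∈ ball (0:ℂ) 1 \ {0})
    (hsum : Summable fun j => 1 - ‖zs j‖)
    (hsep : ∀ j, ∀ F : Finset ℕ, j ∉ F → δ ≤ ∏ l ∈ F, pseudoDist (zs j) (zs l)) (j : ℕ) :
    ∃ W : ℂ → ℂ, AnalyticAt ℂ W (zs j) ∧
      (fun z => blaschkeProd zs z) =ᶠ[𝓝 (zs j)] (fun z => (z - zs j) * W z) ∧
      δ ^ 2 / (2 * (1 - ‖zs j‖)) ≤ ‖W (zs j)‖ ∧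
      ‖W (zs j)‖ ≤ 1 / (1 - ‖zs j‖) := by
  classical
  set a := zs j with ha_def
  have hmem' := fun l => hmem l
  have habs_lt : ∀ l, ‖zs l‖ < 1 := by
    intro l
    have := (hmem l).1
    rwa [mem_ball_zero_iff] at this
  have hne0 : ∀ l, zs l ≠ 0 := by
    intro l
    have := (hmem l).2
    simpa using this
  have ha1 : ‖a‖ < 1 := habs_lt j
  have ha0 : a ≠ 0 := hne0 j
  set r : ℝ := 1 - ‖a‖ with hr_def
  have hr : 0 < r := by simp only [hr_def]; linarith
  -- the Blaschke factors
  set F : ℕ → ℂ → ℂ := fun l z =>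
    ((starRingEnd ℂ) (zs l) / (‖zs l‖ : ℂ)) *
      ((zs l - z) / (1 - (starRingEnd ℂ) (zs l) * z)) with hF_def
  have hBF : ∀ z, blaschkeProd zs z = ∏' l, F l z := fun z => rfl
  -- the compact set around a
  set K : Set ℂ := closedBall a (r/4) with hK_def
  have hKsub : ∀ z ∈ K, ‖z‖ < 1 ∧ r/2 ≤ 1 - ‖z‖ := by
    intro z hz
    rw [hK_def, mem_closedBall, dist_eq_norm] at hz
    have : ‖z‖ ≤ ‖a‖ + r/4 := by
      calc ‖z‖ = ‖a + (z - a)‖ := by ring_nf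
        _ ≤ ‖a‖ + ‖z - a‖ := norm_add_le _ _
        _ ≤ ‖a‖ + r/4 := by linarith
    constructor <;> [skip; skip] <;> simp only [hr_def] at this ⊢ <;> linarith
  -- the uniform bounds
  set u : ℕ → ℝ := fun l => 2 * (1 - ‖zs l‖) / (r/2) with hu_def
  have hu_nonneg : ∀ l, 0 ≤ u l := by
    intro l
    have := habs_lt l
    exact div_nonneg (by nlinarith) (by linarith)
  have hu_sum : Summable u := by
    have := (hsum.mul_left 2).div_const (r/2)
    simpa [hu_def, mul_div_assoc] using this
  have hu_bound : ∀ z ∈ K, ∀ l, ‖F l z - 1‖ ≤ u l := by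
    intro z hz l
    obtain ⟨hz1, hz2⟩ := hKsub z hz
    calc ‖F l z - 1‖ ≤ 2 * (1 - ‖zs l‖) / (1 - ‖z‖) :=
          factor_sub_one_norm (hne0 l) (habs_lt l).le hz1
      _ ≤ u l := by
          rw [hu_def]
          apply div_le_div_of_nonneg_left (by nlinarith [habs_lt l]) (by positivity) hz2
  -- the finite exceptional set
  set s : Set ℕ := {l | ¬ u l ≤ 1/2} ∪ {j} with hs_def
  have hjs : j ∈ s := Set.mem_union_right _ rfl
  have hsfin : s.Finite := by
    apply Set.Finite.union _ (Set.finite_singleton j)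
    have h0 := hu_sum.tendsto_cofinite_zero
    have : ∀ᶠ l in Filter.cofinite, u l ≤ 1/2 := by
      filter_upwards [h0.eventually (eventually_le_nhds (by norm_num : (0:ℝ) < 1/2))] with l hl
        using hl
    simpa [Filter.eventually_cofinite] using this
  haveI : Fintype ↥s := hsfin.fintype
  -- small tail factors
  have htail : ∀ z ∈ K, ∀ l : ↥sᶜ, ‖F (l : ℕ) z - 1‖ ≤ 1/2 := by
    intro z hz l
    have hls : (l : ℕ) ∈ sᶜ := l.2
    have : u l ≤ 1/2 := by
      by_contra h
      exact hls (Set.mem_union_left _ h)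
    exact le_trans (hu_bound z hz l) this
  have hFne : ∀ z ∈ K, ∀ l : ↥sᶜ, F (l : ℕ) z ≠ 0 := by
    intro z hz l h0
    have := htail z hz l
    rw [h0] at this
    simp at this
    linarith
  have hslit : ∀ z ∈ K, ∀ l : ↥sᶜ, F (l : ℕ) z ∈ Complex.slitPlane := by
    intro z hz l
    have h := htail z hz l
    have hre : |(F (l : ℕ) z - 1).re| ≤ 1/2 := le_trans (Complex.abs_re_le_norm _) h
    rw [Complex.sub_re, Complex.one_re] at hre
    rw [Complex.mem_slitPlane_iff]
    left
    cases abs_le.1 hre with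
    | intro h1 h2 => linarith
  have hlog_bound : ∀ z ∈ K, ∀ l : ↥sᶜ, ‖Complex.log (F (l : ℕ) z)‖ ≤ 3/2 * u (l : ℕ) := by
    intro z hz l
    have h := htail z hz l
    have := Complex.norm_log_one_add_half_le_self (z := F (l : ℕ) z - 1)
      (by exact h)
    rw [show (1 : ℂ) + (F (l : ℕ) z - 1) = F (l : ℕ) z by ring] at this
    calc ‖Complex.log (F (l : ℕ) z)‖ ≤ 3/2 * ‖F (l : ℕ) z - 1‖ := this
      _ ≤ 3/2 * u (l : ℕ) := by
          nlinarith [hu_bound z hz (l : ℕ)]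
  have hu_sum' : Summable (fun l : ↥sᶜ => 3/2 * u (l : ℕ)) :=
    ((hu_sum.mul_left (3/2)).subtype _)
  have hlog_sum : ∀ z ∈ K, Summable (fun l : ↥sᶜ => Complex.log (F (l : ℕ) z)) := by
    intro z hz
    exact Summable.of_norm_bounded hu_sum' (hlog_bound z hz)
  -- the tail function
  set L : ℂ → ℂ := fun z => ∑' l : ↥sᶜ, Complex.log (F (l : ℕ) z) with hL_def
  set T : ℂ → ℂ := fun z => Complex.exp (L z) with hT_def
  have hT_hasprod : ∀ z ∈ K, HasProd (fun l : ↥sᶜ => F (l : ℕ) z) (T z) := by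
    intro z hz
    have h1 : HasProd (Complex.exp ∘ fun l : ↥sᶜ => Complex.log (F (l : ℕ) z))
        (Complex.exp (L z)) := (hlog_sum z hz).hasSum.cexp
    exact h1.congr_fun fun l => (Complex.exp_log (hFne z hz l)).symm
  -- splitting off the head
  set js : ↥s := ⟨j, hjs⟩ with hjs_def
  set g : ℂ → ℂ := fun z =>
    -((starRingEnd ℂ) a / (‖a‖ : ℂ)) / (1 - (starRingEnd ℂ) a * z) with hg_def
  set W : ℂ → ℂ := fun z =>
    g z * ((∏ l ∈ Finset.univ.erase js, F (l : ℕ) z) * T z) with hW_def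
  have hsplit : ∀ z ∈ K, blaschkeProd zs z = (z - a) * W z := by
    intro z hz
    have hhead : HasProd (fun l : ↥s => F (l : ℕ) z) (∏ l : ↥s, F (l : ℕ) z) :=
      hasProd_fintype _
    have hall : HasProd (fun l => F l z) ((∏ l : ↥s, F (l : ℕ) z) * T z) :=
      HasProd.mul_compl hhead (hT_hasprod z hz)
    rw [hBF z, hall.tprod_eq]
    have hpull : (∏ l : ↥s, F (l : ℕ) z)
        = F j z * ∏ l ∈ Finset.univ.erase js, F (l : ℕ) z := by
      rw [← Finset.mul_prod_erase Finset.univ _ (Finset.mem_univ js)]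
    have hFj : F j z = (z - a) * g z := by
      rw [hF_def, hg_def]
      simp only [← ha_def]
      rw [div_eq_mul_inv, div_eq_mul_inv, neg_div, div_eq_mul_inv]
      ring
    rw [hpull, hFj, hW_def]
    ring
  have hKnhds : K ∈ 𝓝 a := closedBall_mem_nhds a (by positivity)
  have hev : (fun z => blaschkeProd zs z) =ᶠ[𝓝 a] (fun z => (z - a) * W z) := by
    filter_upwards [hKnhds] with z hz using hsplit z hz
  -- analyticity of W at a
  have hden_a : ∀ w : ℂ, ‖w‖ < 1 → (1 : ℂ) - (starRingEnd ℂ) w * a ≠ 0 :=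
    fun w hw => denom_ne_zero hw.le ha1
  have hFanal : ∀ l, AnalyticAt ℂ (fun z => F l z) a := by
    intro l
    apply analyticAt_const.mul
    apply AnalyticAt.div
    · exact analyticAt_const.sub analyticAt_id
    · exact analyticAt_const.sub (analyticAt_const.mul analyticAt_id)
    · exact hden_a (zs l) (habs_lt l)
  have hganal : AnalyticAt ℂ g a := by
    apply AnalyticAt.div analyticAt_const
      (analyticAt_const.sub (analyticAt_const.mul analyticAt_id))
    exact hden_a a ha1
  have hTanal : AnalyticAt ℂ T a := by
    have hball : ball a (r/4) ∈ 𝓝 a := ball_mem_nhds a (by positivity)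
    have hLdiff : DifferentiableOn ℂ L (ball a (r/4)) := by
      have htu : TendstoUniformlyOn
          (fun (t : Finset ↥sᶜ) z => ∑ l ∈ t, Complex.log (F (l : ℕ) z)) L atTop K := by
        apply tendstoUniformlyOn_tsum hu_sum'
        intro l z hz
        exact hlog_bound z hz l
      have := (htu.mono (ball_subset_closedBall)).tendstoLocallyUniformlyOn
      apply this.differentiableOn _ isOpen_ball
      filter_upwards with t
      apply DifferentiableOn.fun_sum
      intro l _
      intro z hz
      have hzK : z ∈ K := ball_subset_closedBall hz
      have hzlt : ‖z‖ < 1 := (hKsub z hzK).1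
      have hFdiff : DifferentiableAt ℂ (fun z => F (l : ℕ) z) z := by
        apply DifferentiableAt.mul (differentiableAt_const _)
        apply DifferentiableAt.div
        · exact (differentiableAt_const _).sub differentiableAt_id
        · exact (differentiableAt_const _).sub ((differentiableAt_const _).mul differentiableAt_id)
        · exact denom_ne_zero (habs_lt (l : ℕ)).le hzlt
      exact (hFdiff.clog (hslit z hzK l)).differentiableWithinAt
    have hTdiff : DifferentiableOn ℂ T (ball a (r/4)) := hLdiff.cexp
    exact hTdiff.analyticAt hball
  have hprodanal : AnalyticAt ℂ (fun z => ∏ l ∈ Finset.univ.erase js, F (l : ℕ) z) a :=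
    Finset.analyticAt_fun_prod (f := fun (l : ↥s) (z : ℂ) => F (l : ℕ) z) _
      (fun l _ => hFanal (l : ℕ))
  have hWanal : AnalyticAt ℂ W a := hganal.mul (hprodanal.mul hTanal)
  -- value estimates at a
  have haK : a ∈ K := mem_closedBall_self (by positivity)
  have habs_ga : ‖g a‖ = 1 / (1 - ‖a‖ ^ 2) := by
    have hκ : ‖(starRingEnd ℂ) a / (‖a‖ : ℂ)‖ = 1 := by
      rw [norm_div, Complex.norm_conj, Complex.norm_real, Real.norm_eq_abs,
        _root_.abs_of_nonneg (norm_nonneg a), div_self (norm_ne_zero_iff.mpr ha0)]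
    have hden : (1 : ℂ) - (starRingEnd ℂ) a * a = ((1 - ‖a‖ ^ 2 : ℝ) : ℂ) := by
      rw [conj_mul_self]; push_cast; ring
    rw [hg_def]
    simp only
    rw [norm_div, norm_neg, hκ, hden, Complex.norm_real, Real.norm_eq_abs,
      _root_.abs_of_nonneg (by nlinarith [norm_nonneg a] : (0:ℝ) ≤ 1 - ‖a‖ ^ 2)]
  have hfac_abs : ∀ l, ‖F l a‖ = pseudoDist a (zs l) := by
    intro l
    have hκ : ‖(starRingEnd ℂ) (zs l) / (‖zs l‖ : ℂ)‖ = 1 := by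
      rw [norm_div, Complex.norm_conj, Complex.norm_real, Real.norm_eq_abs,
        _root_.abs_of_nonneg (norm_nonneg _), div_self (norm_ne_zero_iff.mpr (hne0 l))]
    rw [hF_def]
    simp only
    rw [norm_mul, hκ, one_mul, norm_div,
      show zs l - a = -(a - zs l) by ring, norm_neg]
    rfl
  have hpseudo_le_one : ∀ l, pseudoDist a (zs l) ≤ 1 := by
    intro l
    apply div_le_one_of_le₀ (dist_le_denom (habs_lt l).le ha1.le) (norm_nonneg _)
  have hpseudo_nonneg : ∀ l, 0 ≤ pseudoDist a (zs l) :=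
    fun l => div_nonneg (norm_nonneg _) (norm_nonneg _)
  -- head product bounds
  set P : ℝ := ∏ l ∈ Finset.univ.erase js, pseudoDist a (zs (l : ℕ)) with hP_def
  have hPlb : δ ≤ P := by
    have himg : ((Finset.univ.erase js).image (fun l : ↥s => (l : ℕ))) ∈
        {FN : Finset ℕ | j ∉ FN} := by
      simp only [Set.mem_setOf_eq, Finset.mem_image]
      rintro ⟨x, hx, hxj⟩
      exact (Finset.mem_erase.1 hx).1 (Subtype.ext hxj)
    have := hsep j _ himg
    rwa [Finset.prod_image (fun x _ y _ h => Subtype.ext h)] at this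
  have hPub : P ≤ 1 :=
    Finset.prod_le_one (fun l _ => hpseudo_nonneg _) (fun l _ => hpseudo_le_one _)
  -- tail bounds
  have hTa : HasProd (fun l : ↥sᶜ => ‖F (l : ℕ) a‖) (‖T a‖) :=
    (hT_hasprod a haK).norm
  have hTlb : δ ≤ ‖T a‖ := by
    apply ge_of_tendsto' hTa
    intro t
    have himg : (t.image (fun l : ↥sᶜ => (l : ℕ))) ∈ {FN : Finset ℕ | j ∉ FN} := by
      simp only [Set.mem_setOf_eq, Finset.mem_image]
      rintro ⟨x, hx, hxj⟩
      exact x.2 (hxj ▸ hjs)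
    have h := hsep j _ himg
    rw [Finset.prod_image (fun x _ y _ h => Subtype.ext h)] at h
    calc δ ≤ ∏ l ∈ t, pseudoDist a (zs (l : ℕ)) := h
      _ = ∏ l ∈ t, ‖F (l : ℕ) a‖ := by
          exact Finset.prod_congr rfl fun l _ => (hfac_abs (l : ℕ)).symm
  have hTub : ‖T a‖ ≤ 1 := by
    apply le_of_tendsto' hTa
    intro t
    calc ∏ l ∈ t, ‖F (l : ℕ) a‖
        = ∏ l ∈ t, pseudoDist a (zs (l : ℕ)) :=
          Finset.prod_congr rfl fun l _ => hfac_abs (l : ℕ)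
      _ ≤ 1 := Finset.prod_le_one (fun l _ => hpseudo_nonneg _) (fun l _ => hpseudo_le_one _)
  -- assemble
  have hWa : ‖W a‖ = 1 / (1 - ‖a‖ ^ 2) * (P * ‖T a‖) := by
    rw [hW_def]
    simp only
    rw [norm_mul, norm_mul, habs_ga, norm_prod]
    congr 2
    rw [hP_def]
    exact Finset.prod_congr rfl fun l _ => hfac_abs (l : ℕ)
  have hTa_nonneg : 0 ≤ ‖T a‖ := norm_nonneg _
  have hP_nonneg : 0 ≤ P := le_trans hδ.le hPlb
  have hpos2 : 0 < 1 - ‖a‖ ^ 2 := by nlinarith [norm_nonneg a]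
  refine ⟨W, hWanal, hev, ?_, ?_⟩
  · rw [hWa, one_div_mul_eq_div]
    apply div_le_div₀ (by nlinarith) (by nlinarith) hpos2 (by nlinarith [norm_nonneg a])
  · rw [hWa, one_div_mul_eq_div]
    apply div_le_div₀ (by norm_num) (by nlinarith) (by linarith) (by nlinarith [norm_nonneg a])

/-- **Lemma.** If `B` is an interpolating Blaschke product with zeros `{z_j}` and Carleson
constant at least `δ > 0`, then `|(B^m)^(m)(z_j)| ≍ (1-|z_j|)^(-m)`, with constants
depending only on `m` and `δ`. -/
theorem blaschke_pow_deriv_at_zeros_asymp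
    (m : ℕ) (hm : 1 ≤ m) (δ : ℝ) (hδ : 0 < δ) :
    ∃ c C : ℝ, 0 < c ∧ 0 < C ∧
      ∀ zs : ℕ → ℂ, (∀ j, zs j ∈ ball (0:ℂ) 1 \ {0}) →
        (Summable fun j => 1 - ‖zs j‖) →
        Function.Injective zs →
        (∀ j, ∀ F : Finset ℕ, j ∉ F → δ ≤ ∏ l ∈ F, pseudoDist (zs j) (zs l)) →
        ∀ j,
          c / (1 - ‖zs j‖) ^ m ≤
            ‖iteratedDeriv m (fun z => (blaschkeProd zs z) ^ m) (zs j)‖ ∧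
          ‖iteratedDeriv m (fun z => (blaschkeProd zs z) ^ m) (zs j)‖ ≤
            C / (1 - ‖zs j‖) ^ m := by
  refine ⟨(m.factorial : ℝ) * δ ^ (2 * m) / 2 ^ m, (m.factorial : ℝ), by positivity, by positivity,
    fun zs hmem hsum _ hsep j => ?_⟩
  obtain ⟨W, hWanal, hev, hlb, hub⟩ := blaschke_local_factor δ hδ zs hmem hsum hsep j
  have ha1 : ‖zs j‖ < 1 := by
    have := (hmem j).1
    rwa [mem_ball_zero_iff] at this
  set a := zs j
  set r : ℝ := 1 - ‖a‖ with hr_def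
  have hr : 0 < r := by simp only [hr_def]; linarith
  have hev' : (fun z => blaschkeProd zs z ^ m) =ᶠ[𝓝 a]
      (fun z => (z - a) ^ m * (fun w => W w ^ m) z) := by
    filter_upwards [hev] with z hz
    rw [hz, mul_pow]
  have hkey : iteratedDeriv m (fun z => blaschkeProd zs z ^ m) a
      = (Nat.factorial m : ℂ) * W a ^ m := by
    rw [Filter.EventuallyEq.iteratedDeriv_eq m hev']
    exact iteratedDeriv_sub_pow_mul a m _ (hWanal.pow m)
  have habs : ‖iteratedDeriv m (fun z => blaschkeProd zs z ^ m) a‖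
      = (Nat.factorial m : ℝ) * ‖W a‖ ^ m := by
    rw [hkey, norm_mul, norm_pow, Complex.norm_natCast]
  rw [habs]
  have hWnn : 0 ≤ ‖W a‖ := norm_nonneg _
  constructor
  · have h1 : (δ ^ 2 / (2 * r)) ^ m ≤ ‖W a‖ ^ m :=
      pow_le_pow_left₀ (by positivity) hlb m
    have e1 : (m.factorial : ℝ) * δ ^ (2 * m) / 2 ^ m / r ^ m
        = (m.factorial : ℝ) * (δ ^ 2 / (2 * r)) ^ m := by
      rw [div_pow, mul_pow, ← pow_mul]
      field_simp
    rw [e1]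
    have : (0:ℝ) ≤ (m.factorial : ℝ) := by positivity
    nlinarith
  · have h1 : ‖W a‖ ^ m ≤ (1 / r) ^ m := pow_le_pow_left₀ hWnn hub m
    have e1 : (m.factorial : ℝ) / r ^ m = (m.factorial : ℝ) * (1 / r) ^ m := by
      rw [div_pow, one_pow]
      field_simp
    rw [e1]
    have : (0:ℝ) ≤ (m.factorial : ℝ) := by positivity
    nlinarith

end
end
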